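/- Let m ≥ 5 be an integer with gcd(m,3) = 1 and let t be any integer. Then for every integer h ≥ 1, ∏_{k=1}^{h} |sin(2^{k−1}·tπ/m)| ≤ b_m^{h−1}. -/

import Mathlib

open Finset Filter Topology

noncomputable section

/-- `s n` is the number of 1's in the binary expansion of `n`. -/
def s (n : ℕ) : ℕ := (Nat.digits 2 n).count 1

/-- `S m x = ∑_{0 ≤ n < x, m ∣ n} (-1)^(s n)`. -/
def S (m x : ℕ) : ℝ := ∑ n ∈ Finset.range x, if m ∣ n then (-1 : ℝ) ^ (s n) else 0

/-- `F α N = ∑_{n=0}^{N-1} e^{2πi(αn + s(n)/2)}`. -/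
def F (α : ℝ) (N : ℕ) : ℂ :=
  ∑ n ∈ Finset.range N, Complex.exp (2 * Real.pi * Complex.I * ((α : ℂ) * n + (s n : ℂ) / 2))

/-- `bsq m = b_m ^ 2`, defined by cases on `m mod 3`. -/
def bsq (m : ℕ) : ℝ :=
  if m % 3 = 0 then
    Real.sin (Real.pi / 3 * (1 + 3 / m)) * (Real.sqrt 3 - Real.sin (Real.pi / 3 * (1 + 3 / m)))
  else if m % 3 = 1 then
    Real.sin (Real.pi / 3 * (1 - 1 / m)) * (Real.sqrt 3 - Real.sin (Real.pi / 3 * (1 - 1 / m)))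
  else
    Real.sin (Real.pi / 3 * (1 + 1 / m)) * (Real.sqrt 3 - Real.sin (Real.pi / 3 * (1 + 1 / m)))

/-- `b m` is the positive real number with `(b m)^2 = bsq m`. -/
def b (m : ℕ) : ℝ := Real.sqrt (bsq m)

/-- `lam m = λ_m = 1 + log₂ b_m`. -/
def lam (m : ℕ) : ℝ := 1 + Real.logb 2 (b m)

/-- `mu m = μ_m = (2 b_m + 1)/(2 b_m - 1)`. -/
def mu (m : ℕ) : ℝ := (2 * b m + 1) / (2 * b m - 1)

/-- `U m x`: positive integers `≤ x` divisible by `m` and not by 3. -/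
def U (m x : ℕ) : Finset ℕ := (Finset.Icc 1 x).filter (fun n => m ∣ n ∧ ¬ (3 ∣ n))

/-- `V p n`: positive integers `≤ n` whose least prime divisor is `p`. -/
def V (p n : ℕ) : Finset ℕ := (Finset.Icc 1 n).filter (fun j => Nat.minFac j = p)

open Real

set_option maxHeartbeats 1600000

private lemma g7_keyII (s c r : ℝ) (hs : 0 ≤ s) (hc : 3/4 ≤ c) (hc1 : c ≤ 1)
    (h1 : s^2 + c^2 = 1) (hr : r^2 = 3) (hr0 : 0 ≤ r) :
    ((r*(2*c^2-1) - 2*s*c)/2)^2 ≤ (r*c+s)/2 * (r - (r*c+s)/2) := by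
  have hid : (r*c+s)/2 * (r - (r*c+s)/2) - ((r*(2*c^2-1) - 2*s*c)/2)^2
      = (1-c)*(2*c^3+2*c^2+c/2-1) + s*r*(2*c^3 - 3/2*c + 1/2) := by
    linear_combination (-(c^2) - 1/4) * h1 + (-(c^4) + 3/4*c^2 + 1/2*c - 1/4) * hr
  nlinarith [mul_nonneg (sub_nonneg.2 hc1) (show (0:ℝ) ≤ 2*c^3+2*c^2+c/2-1 by nlinarith),
    mul_nonneg (mul_nonneg hs hr0) (show (0:ℝ) ≤ 2*c^3 - 3/2*c + 1/2 by
      nlinarith [sq_nonneg (c-3/4), sq_nonneg (c-1)])]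

private lemma g7_keyIII (s c r : ℝ) (hs : 0 ≤ s) (hc : 3/4 ≤ c) (hc1 : c ≤ 1)
    (h1 : s^2 + c^2 = 1) (hr : r^2 = 3) (hr0 : 0 ≤ r) :
    (r*(2*c^2-1) + 2*s*c)/2 * ((r*(2*(2*c^2-1)^2-1) - 2*(2*s*c)*(2*c^2-1))/2)
      ≤ (r*c-s)/2 * (r - (r*c-s)/2) := by
  have hid : (r*c-s)/2 * (r - (r*c-s)/2)
      - (r*(2*c^2-1) + 2*s*c)/2 * ((r*(2*(2*c^2-1)^2-1) - 2*(2*s*c)*(2*c^2-1))/2)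
      = (1-c)*(16*c^5+16*c^4-8*c^3-8*c^2+2*c+1/2) + r/2*s*(2*c-1) := by
    linear_combination (4*c^4 - 2*c^2 - 1/4) * h1 + (-4*c^6 + 6*c^4 - 11/4*c^2 + 1/2*c + 1/4) * hr
  have hQ : (0:ℝ) ≤ 16*c^5+16*c^4-8*c^3-8*c^2+2*c+1/2 := by
    nlinarith [sq_nonneg (c-3/4), sq_nonneg c,
      mul_nonneg (mul_nonneg (sq_nonneg c) (by linarith : (0:ℝ) ≤ c + 1))
        (by nlinarith : (0:ℝ) ≤ 2*c^2 - 1)]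
  nlinarith [mul_nonneg (sub_nonneg.2 hc1) hQ,
    mul_nonneg (mul_nonneg hr0 hs) (by linarith : (0:ℝ) ≤ 2*c-1)]

private lemma g7_dfacts (d : ℝ) (hd0 : 0 ≤ d) (hd : d ≤ 4/15) :
    0 ≤ Real.sin d ∧ 3/4 ≤ Real.cos d ∧ Real.cos d ≤ 1 := by
  refine ⟨Real.sin_nonneg_of_nonneg_of_le_pi hd0 (by nlinarith [Real.pi_gt_three]), ?_,
    Real.cos_le_one d⟩
  nlinarith [Real.one_sub_sq_div_two_le_cos (x := d)]

private lemma g7_wrapII (d : ℝ) (hd0 : 0 ≤ d) (hd : d ≤ 4/15) :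
    Real.sin (π/3 - 2*d)^2 ≤ Real.sin (π/3 + d) * (Real.sqrt 3 - Real.sin (π/3 + d)) := by
  obtain ⟨hs, hc, hc1⟩ := g7_dfacts d hd0 hd
  have h1 : Real.sin d ^ 2 + Real.cos d ^ 2 = 1 := Real.sin_sq_add_cos_sq d
  have hr : Real.sqrt 3 ^ 2 = 3 := Real.sq_sqrt (by norm_num)
  have hA : Real.sin (π/3 - 2*d)
      = (Real.sqrt 3*(2*Real.cos d^2-1) - 2*Real.sin d*Real.cos d)/2 := by
    rw [Real.sin_sub, Real.sin_pi_div_three, Real.cos_pi_div_three, Real.sin_two_mul,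
      Real.cos_two_mul]
    ring
  have hB : Real.sin (π/3 + d) = (Real.sqrt 3*Real.cos d + Real.sin d)/2 := by
    rw [Real.sin_add, Real.sin_pi_div_three, Real.cos_pi_div_three]; ring
  rw [hA, hB]
  exact g7_keyII _ _ _ hs hc hc1 h1 hr (Real.sqrt_nonneg 3)

private lemma g7_wrapIII (d : ℝ) (hd0 : 0 ≤ d) (hd : d ≤ 4/15) :
    Real.sin (π/3 + 2*d) * Real.sin (π/3 - 4*d)
      ≤ Real.sin (π/3 - d) * (Real.sqrt 3 - Real.sin (π/3 - d)) := by
  obtain ⟨hs, hc, hc1⟩ := g7_dfacts d hd0 hd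
  have h1 : Real.sin d ^ 2 + Real.cos d ^ 2 = 1 := Real.sin_sq_add_cos_sq d
  have hr : Real.sqrt 3 ^ 2 = 3 := Real.sq_sqrt (by norm_num)
  have hs2 : Real.sin (2*d) = 2*Real.sin d*Real.cos d := by rw [Real.sin_two_mul]
  have hc2 : Real.cos (2*d) = 2*Real.cos d^2-1 := by rw [Real.cos_two_mul]
  have hs4 : Real.sin (4*d) = 2*(2*Real.sin d*Real.cos d)*(2*Real.cos d^2-1) := by
    rw [show (4:ℝ)*d = 2*(2*d) by ring, Real.sin_two_mul, hs2, hc2]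
  have hc4 : Real.cos (4*d) = 2*(2*Real.cos d^2-1)^2-1 := by
    rw [show (4:ℝ)*d = 2*(2*d) by ring, Real.cos_two_mul, hc2]
  have hA : Real.sin (π/3 + 2*d)
      = (Real.sqrt 3*(2*Real.cos d^2-1) + 2*Real.sin d*Real.cos d)/2 := by
    rw [Real.sin_add, Real.sin_pi_div_three, Real.cos_pi_div_three, hs2, hc2]; ring
  have hB : Real.sin (π/3 - 4*d)
      = (Real.sqrt 3*(2*(2*Real.cos d^2-1)^2-1)
          - 2*(2*Real.sin d*Real.cos d)*(2*Real.cos d^2-1))/2 := by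
    rw [Real.sin_sub, Real.sin_pi_div_three, Real.cos_pi_div_three, hs4, hc4]; ring
  have hC : Real.sin (π/3 - d) = (Real.sqrt 3*Real.cos d - Real.sin d)/2 := by
    rw [Real.sin_sub, Real.sin_pi_div_three, Real.cos_pi_div_three]; ring
  rw [hA, hB, hC]
  exact g7_keyIII _ _ _ hs hc hc1 h1 hr (Real.sqrt_nonneg 3)

private lemma g7_wrapIV (d : ℝ) (hd0 : 0 ≤ d) (hd : d ≤ 4/15) :
    Real.sin (π/3 - 2*d) + Real.sin (π/3 + d) ≤ Real.sqrt 3 := by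
  obtain ⟨hs, hc, hc1⟩ := g7_dfacts d hd0 hd
  have hA : Real.sin (π/3 - 2*d)
      = (Real.sqrt 3*(2*Real.cos d^2-1) - 2*Real.sin d*Real.cos d)/2 := by
    rw [Real.sin_sub, Real.sin_pi_div_three, Real.cos_pi_div_three, Real.sin_two_mul,
      Real.cos_two_mul]
    ring
  have hB : Real.sin (π/3 + d) = (Real.sqrt 3*Real.cos d + Real.sin d)/2 := by
    rw [Real.sin_add, Real.sin_pi_div_three, Real.cos_pi_div_three]; ring
  rw [hA, hB]
  nlinarith [mul_nonneg (Real.sqrt_nonneg 3)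
      (by nlinarith : (0:ℝ) ≤ (1-Real.cos d)*(2*Real.cos d+3)),
    mul_nonneg hs (by linarith : (0:ℝ) ≤ 2*Real.cos d-1)]

private lemma g7_f_anti :
    AntitoneOn (fun x => Real.sin x * Real.sin (2*x)) (Set.Icc (π/3) (π/2)) := by
  apply antitoneOn_of_deriv_nonpos (convex_Icc _ _)
  · exact (Real.continuous_sin.mul
      (Real.continuous_sin.comp (continuous_const.mul continuous_id))).continuousOn
  · intro x hx
    have h2 : HasDerivAt (fun y : ℝ => Real.sin (2*y)) (Real.cos (2*x) * 2) x := by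
      simpa using ((hasDerivAt_id x).const_mul 2).sin
    exact ((Real.hasDerivAt_sin x).mul h2).differentiableAt.differentiableWithinAt
  · intro x hx
    rw [interior_Icc] at hx
    have h2 : HasDerivAt (fun y : ℝ => Real.sin (2*y)) (Real.cos (2*x) * 2) x := by
      simpa using ((hasDerivAt_id x).const_mul 2).sin
    rw [show deriv (fun x => Real.sin x * Real.sin (2*x)) x = _ from ((Real.hasDerivAt_sin x).mul h2).deriv]
    have hsx : Real.sqrt 3 / 2 ≤ Real.sin x := by
      rw [← Real.sin_pi_div_three]
      exact Real.sin_le_sin_of_le_of_le_pi_div_two (by nlinarith [Real.pi_pos]) hx.2.le hx.1.le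
    have h1 : Real.sin x ^ 2 + Real.cos x ^ 2 = 1 := Real.sin_sq_add_cos_sq x
    have hr : Real.sqrt 3 ^ 2 = 3 := Real.sq_sqrt (by norm_num)
    have hr1 : (1:ℝ) ≤ Real.sqrt 3 := by nlinarith [Real.sqrt_nonneg 3]
    rw [Real.sin_two_mul, Real.cos_two_mul]
    nlinarith [mul_nonneg (by linarith : (0:ℝ) ≤ Real.sin x - Real.sqrt 3/2)
      (by linarith : (0:ℝ) ≤ Real.sin x + Real.sqrt 3/2), hsx]

private lemma g7_lemL (m : ℕ) (hm : 5 ≤ m) (h3 : m % 3 = 1 ∨ m % 3 = 2) (t : ℤ) :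
    |Real.sin ((t:ℝ) * π / m)| ≤ b m ∨
    |Real.sin ((t:ℝ) * π / m)| * |Real.sin ((2*(t:ℝ)) * π / m)| ≤ bsq m := by
  have hmR : (0:ℝ) < m := by positivity
  have hmne : (m:ℝ) ≠ 0 := ne_of_gt hmR
  have hpi := Real.pi_pos
  have hpi4 := Real.pi_le_four
  have hpi3 := Real.pi_gt_three
  have habs : ∀ a k : ℤ, |Real.sin (((a:ℝ) + m*k) * π / m)| = |Real.sin ((a:ℝ)*π/m)| := by
    intro a k
    have e : ((a:ℝ) + m*k) * π / m = (a:ℝ)*π/m + k*π := by field_simp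
    rw [e, Real.sin_add_int_mul_pi, abs_mul]
    rcases k.even_or_odd with hk | hk
    · rw [hk.neg_one_zpow]; simp
    · rw [Odd.neg_one_zpow hk]; simp
  obtain ⟨v, hv0, hv2, e1, e2⟩ : ∃ v : ℤ, 0 ≤ v ∧ 2*v ≤ (m:ℤ) ∧
      |Real.sin ((t:ℝ) * π / m)| = |Real.sin ((v:ℝ)*π/m)| ∧
      |Real.sin ((2*(t:ℝ)) * π / m)| = |Real.sin ((2*(v:ℝ))*π/m)| := by
    set q := t % (m:ℤ) with hq
    have hq0 : 0 ≤ q := Int.emod_nonneg t (by exact_mod_cast hmne)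
    have hqm : q < m := Int.emod_lt_of_pos t (by exact_mod_cast hmR)
    have htqZ : t = q + (m:ℤ)*(t/(m:ℤ)) := by
      rw [hq]; linarith [Int.emod_add_mul_ediv t (m:ℤ)]
    have htq : (t:ℝ) = (q:ℝ) + (m:ℝ)*((t/(m:ℤ):ℤ):ℝ) := by exact_mod_cast htqZ
    have ht1 : |Real.sin ((t:ℝ) * π / m)| = |Real.sin ((q:ℝ)*π/m)| := by
      rw [htq]; exact habs q (t / (m:ℤ))
    have ht2 : |Real.sin ((2*(t:ℝ)) * π / m)| = |Real.sin ((2*(q:ℝ))*π/m)| := by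
      have h2tq : (2*(t:ℝ)) = ((2*q:ℤ):ℝ) + (m:ℝ)*((2*(t/(m:ℤ)):ℤ):ℝ) := by
        push_cast; rw [htq]; ring
      rw [h2tq, habs (2*q) (2*(t/(m:ℤ)))]
      norm_num
    by_cases hq2 : 2*q ≤ (m:ℤ)
    · exact ⟨q, hq0, hq2, ht1, ht2⟩
    · refine ⟨(m:ℤ) - q, by omega, by omega, ?_, ?_⟩
      · rw [ht1]
        have e : ((((m:ℤ) - q : ℤ)):ℝ)*π/m = π - (q:ℝ)*π/m := by push_cast; field_simp
        rw [e, Real.sin_pi_sub]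
      · rw [ht2]
        have e : (2*((((m:ℤ) - q : ℤ)):ℝ))*π/m = 2*π - (2*(q:ℝ))*π/m := by
          push_cast; field_simp
        have e2 : Real.sin (2*π - (2*(q:ℝ))*π/m) = -Real.sin ((2*(q:ℝ))*π/m) := by
          rw [Real.sin_sub]; simp [Real.sin_two_pi, Real.cos_two_pi]
        rw [e, e2, abs_neg]
  rw [e1, e2]
  obtain ⟨x, hxdef⟩ : ∃ x : ℝ, x = (v:ℝ)*π/m := ⟨_, rfl⟩
  obtain ⟨d, hddef⟩ : ∃ d : ℝ, d = π/3*(1/(m:ℝ)) := ⟨_, rfl⟩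
  rw [← hxdef]
  have hd0 : 0 < d := by rw [hddef]; positivity
  have h5 : (5:ℝ) ≤ m := by exact_mod_cast hm
  have hinv0 : (0:ℝ) < 1/(m:ℝ) := by positivity
  have h1m5 : 1/(m:ℝ) ≤ 1/5 := by
    rw [div_le_div_iff₀ hmR (by norm_num)]; linarith
  have hd415 : d ≤ 4/15 := by
    rw [hddef]
    nlinarith [mul_le_mul hpi4 h1m5 hinv0.le (by norm_num : (0:ℝ) ≤ 4)]
  have hx0 : 0 ≤ x := by
    rw [hxdef]
    have : (0:ℝ) ≤ (v:ℝ) := by exact_mod_cast hv0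
    positivity
  have hx2 : x ≤ π/2 := by
    rw [hxdef, div_le_iff₀ hmR]
    have : (2*(v:ℝ)) ≤ (m:ℝ) := by exact_mod_cast hv2
    nlinarith
  have hcmp : ∀ a bb : ℤ, a ≤ bb → (a:ℝ)*(π/3)*(1/m) ≤ (bb:ℝ)*(π/3)*(1/m) := by
    intro a bb hab
    have : (a:ℝ) ≤ bb := by exact_mod_cast hab
    have h1 : (0:ℝ) ≤ π/3 := by positivity
    exact mul_le_mul_of_nonneg_right (mul_le_mul_of_nonneg_right this h1) hinv0.le
  have hxeq : x = ((3*v:ℤ):ℝ)*(π/3)*(1/m) := by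
    rw [hxdef]; push_cast; ring
  have hsubeq : ∀ k : ℝ, (((m:ℝ)+k))*(π/3)*(1/m) = π/3 + k*d := by
    intro k; rw [hddef]; field_simp
  have h3m : (3:ℤ) * v ≠ (m:ℤ) := by
    intro hcon
    have h3d : (3:ℤ) ∣ (m:ℤ) := ⟨v, hcon.symm⟩
    have : (3:ℕ) ∣ m := by exact_mod_cast h3d
    omega
  rcases lt_or_gt_of_ne h3m with hlt | hgt
  · left
    have hsx : |Real.sin x| = Real.sin x :=
      abs_of_nonneg (Real.sin_nonneg_of_nonneg_of_le_pi hx0 (by linarith))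
    rw [hsx]
    rcases h3 with hr1 | hr2
    · have hvle : 3*v ≤ (m:ℤ) - 1 := by omega
      have hxle : x ≤ π/3 - d := by
        rw [hxeq]
        calc ((3*v:ℤ):ℝ)*(π/3)*(1/m) ≤ (((m:ℤ)-1:ℤ):ℝ)*(π/3)*(1/m) := hcmp _ _ hvle
          _ = π/3 + (-1)*d := by push_cast; rw [← hsubeq (-1)]; ring_nf
          _ = π/3 - d := by ring
      have hsmono : Real.sin x ≤ Real.sin (π/3 - d) :=
        Real.sin_le_sin_of_le_of_le_pi_div_two (by linarith) (by nlinarith) hxle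
      have hsle : Real.sin (π/3 - d) ≤ Real.sqrt 3 / 2 := by
        rw [← Real.sin_pi_div_three]
        exact Real.sin_le_sin_of_le_of_le_pi_div_two (by nlinarith) (by nlinarith) (by nlinarith)
      have hs0 : 0 ≤ Real.sin (π/3 - d) :=
        Real.sin_nonneg_of_nonneg_of_le_pi (by nlinarith) (by nlinarith)
      have hbsq : bsq m = Real.sin (π/3 - d) * (Real.sqrt 3 - Real.sin (π/3 - d)) := by
        simp only [bsq, if_neg (show ¬ (m % 3 = 0) by omega), if_pos hr1]
        rw [show π / 3 * (1 - 1/(m:ℝ)) = π/3 - d by rw [hddef]; ring]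
      have hsq : Real.sin (π/3 - d) ^ 2 ≤ bsq m := by
        rw [hbsq]
        nlinarith [mul_nonneg hs0
          (show (0:ℝ) ≤ Real.sqrt 3 - 2*Real.sin (π/3 - d) by linarith)]
      calc Real.sin x ≤ Real.sin (π/3 - d) := hsmono
        _ = Real.sqrt (Real.sin (π/3 - d) ^ 2) := (Real.sqrt_sq hs0).symm
        _ ≤ b m := Real.sqrt_le_sqrt hsq
    · have hvle : 3*v ≤ (m:ℤ) - 2 := by omega
      have hxle : x ≤ π/3 - 2*d := by
        rw [hxeq]
        calc ((3*v:ℤ):ℝ)*(π/3)*(1/m) ≤ (((m:ℤ)-2:ℤ):ℝ)*(π/3)*(1/m) := hcmp _ _ hvle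
          _ = π/3 + (-2)*d := by push_cast; rw [← hsubeq (-2)]; ring_nf
          _ = π/3 - 2*d := by ring
      have hsmono : Real.sin x ≤ Real.sin (π/3 - 2*d) :=
        Real.sin_le_sin_of_le_of_le_pi_div_two (by linarith) (by nlinarith) hxle
      have hs0 : 0 ≤ Real.sin (π/3 - 2*d) :=
        Real.sin_nonneg_of_nonneg_of_le_pi (by nlinarith) (by nlinarith)
      have hbsq : bsq m = Real.sin (π/3 + d) * (Real.sqrt 3 - Real.sin (π/3 + d)) := by
        simp only [bsq, if_neg (show ¬ (m % 3 = 0) by omega),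
          if_neg (show ¬ (m % 3 = 1) by omega)]
        rw [show π / 3 * (1 + 1/(m:ℝ)) = π/3 + d by rw [hddef]; ring]
      have hsq : Real.sin (π/3 - 2*d) ^ 2 ≤ bsq m := by
        rw [hbsq]; exact g7_wrapII d hd0.le hd415
      calc Real.sin x ≤ Real.sin (π/3 - 2*d) := hsmono
        _ = Real.sqrt (Real.sin (π/3 - 2*d) ^ 2) := (Real.sqrt_sq hs0).symm
        _ ≤ b m := Real.sqrt_le_sqrt hsq
  · right
    have hs2eq : (2*(v:ℝ))*π/m = 2*x := by rw [hxdef]; ring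
    have habs1 : |Real.sin x| = Real.sin x :=
      abs_of_nonneg (Real.sin_nonneg_of_nonneg_of_le_pi hx0 (by linarith))
    have habs2 : |Real.sin ((2*(v:ℝ))*π/m)| = Real.sin (2*x) := by
      rw [hs2eq]
      exact abs_of_nonneg (Real.sin_nonneg_of_nonneg_of_le_pi (by linarith) (by linarith))
    rw [habs1, habs2]
    rcases h3 with hr1 | hr2
    · have hm7 : 7 ≤ m := by omega
      have h1m7 : 1/(m:ℝ) ≤ 1/7 := by
        have h7 : (7:ℝ) ≤ m := by exact_mod_cast hm7
        rw [div_le_div_iff₀ hmR (by norm_num)]; linarith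
      have hd12 : d ≤ π/12 := by
        rw [hddef]
        nlinarith [mul_le_mul hpi4 h1m7 hinv0.le (by norm_num : (0:ℝ) ≤ 4)]
      have hvge : (m:ℤ) + 2 ≤ 3*v := by omega
      have hxge : π/3 + 2*d ≤ x := by
        rw [hxeq]
        calc π/3 + 2*d = (((m:ℤ)+2:ℤ):ℝ)*(π/3)*(1/m) := by push_cast; rw [hsubeq 2]
          _ ≤ ((3*v:ℤ):ℝ)*(π/3)*(1/m) := hcmp _ _ hvge
      have hanti := g7_f_anti (Set.mem_Icc.2 ⟨by linarith, by linarith⟩)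
        (Set.mem_Icc.2 ⟨by linarith, hx2⟩) hxge
      simp only at hanti
      have hfz : Real.sin (π/3 + 2*d) * Real.sin (2*(π/3 + 2*d)) ≤ bsq m := by
        rw [show 2*(π/3 + 2*d) = π - (π/3 - 4*d) by ring, Real.sin_pi_sub]
        have hbsq : bsq m = Real.sin (π/3 - d) * (Real.sqrt 3 - Real.sin (π/3 - d)) := by
          simp only [bsq, if_neg (show ¬ (m % 3 = 0) by omega), if_pos hr1]
          rw [show π / 3 * (1 - 1/(m:ℝ)) = π/3 - d by rw [hddef]; ring]
        rw [hbsq]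
        exact g7_wrapIII d hd0.le hd415
      exact le_trans hanti hfz
    · have hvge : (m:ℤ) + 1 ≤ 3*v := by omega
      have hxge : π/3 + d ≤ x := by
        rw [hxeq]
        calc π/3 + d = (((m:ℤ)+1:ℤ):ℝ)*(π/3)*(1/m) := by
              push_cast; rw [hsubeq 1]; ring
          _ ≤ ((3*v:ℤ):ℝ)*(π/3)*(1/m) := hcmp _ _ hvge
      have hanti := g7_f_anti (Set.mem_Icc.2 ⟨by linarith, by nlinarith⟩)
        (Set.mem_Icc.2 ⟨by linarith, hx2⟩) hxge
      simp only at hanti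
      have hfz : Real.sin (π/3 + d) * Real.sin (2*(π/3 + d)) ≤ bsq m := by
        rw [show 2*(π/3 + d) = π - (π/3 - 2*d) by ring, Real.sin_pi_sub]
        have hbsq : bsq m = Real.sin (π/3 + d) * (Real.sqrt 3 - Real.sin (π/3 + d)) := by
          simp only [bsq, if_neg (show ¬ (m % 3 = 0) by omega),
            if_neg (show ¬ (m % 3 = 1) by omega)]
          rw [show π / 3 * (1 + 1/(m:ℝ)) = π/3 + d by rw [hddef]; ring]
        rw [hbsq]
        have hs0 : 0 ≤ Real.sin (π/3 + d) :=
          Real.sin_nonneg_of_nonneg_of_le_pi (by nlinarith) (by nlinarith)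
        nlinarith [g7_wrapIV d hd0.le hd415]
      exact le_trans hanti hfz

private lemma g7_bsq_nonneg (m : ℕ) (hm : 5 ≤ m) : 0 ≤ bsq m := by
  have hmR : (0:ℝ) < m := by positivity
  have h5 : (5:ℝ) ≤ m := by exact_mod_cast hm
  have hpi := Real.pi_pos
  have h1m5 : 1/(m:ℝ) ≤ 1/5 := by rw [div_le_div_iff₀ hmR (by norm_num)]; linarith
  have h3m5 : (3:ℝ)/(m:ℝ) ≤ 3/5 := by rw [div_le_div_iff₀ hmR (by norm_num)]; linarith
  have hr3 : (1:ℝ) ≤ Real.sqrt 3 := by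
    nlinarith [Real.sq_sqrt (show (0:ℝ) ≤ 3 by norm_num), Real.sqrt_nonneg 3]
  have key : ∀ y : ℝ, 0 ≤ y → y ≤ π → 0 ≤ Real.sin y * (Real.sqrt 3 - Real.sin y) := by
    intro y h0 h1
    have hs0 := Real.sin_nonneg_of_nonneg_of_le_pi h0 h1
    have hs1 := Real.sin_le_one y
    nlinarith
  have hp1 : (0:ℝ) ≤ 3/(m:ℝ) := by positivity
  have hp2 : (0:ℝ) ≤ 1/(m:ℝ) := by positivity
  have e1 := mul_le_mul_of_nonneg_left h3m5 hpi.le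
  have e2 := mul_le_mul_of_nonneg_left h1m5 hpi.le
  have e3 := mul_nonneg hpi.le hp1
  have e4 := mul_nonneg hpi.le hp2
  unfold bsq
  split_ifs with h0 h1
  · exact key _ (by positivity) (by nlinarith)
  · refine key _ ?_ (by nlinarith)
    nlinarith
  · exact key _ (by positivity) (by nlinarith)

private lemma g7_b_sq (m : ℕ) (hm : 5 ≤ m) : b m ^ 2 = bsq m :=
  Real.sq_sqrt (g7_bsq_nonneg m hm)

private lemma g7_b_nonneg (m : ℕ) : 0 ≤ b m := Real.sqrt_nonneg _

private lemma g7_b_le_one (m : ℕ) : b m ≤ 1 := by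
  have h1 : bsq m ≤ 1 := by
    have hr : Real.sqrt 3 ^ 2 = 3 := Real.sq_sqrt (by norm_num)
    unfold bsq
    split_ifs <;>
      nlinarith [sq_nonneg (Real.sin (π / 3 * (1 + 3 / m)) - Real.sqrt 3 / 2),
        sq_nonneg (Real.sin (π / 3 * (1 - 1 / m)) - Real.sqrt 3 / 2),
        sq_nonneg (Real.sin (π / 3 * (1 + 1 / m)) - Real.sqrt 3 / 2)]
  calc b m = Real.sqrt (bsq m) := rfl
    _ ≤ Real.sqrt 1 := Real.sqrt_le_sqrt h1
    _ = 1 := Real.sqrt_one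

private lemma g7_main (m : ℕ) (hm : 5 ≤ m) (h3 : m % 3 = 1 ∨ m % 3 = 2) :
    ∀ n : ℕ, ∀ t : ℤ, 1 ≤ n →
      (∏ k ∈ Finset.range n, |Real.sin (2 ^ k * (t : ℝ) * Real.pi / m)|) ≤ b m ^ (n - 1) := by
  have hb0 : 0 ≤ b m := g7_b_nonneg m
  have hb1 : b m ≤ 1 := g7_b_le_one m
  have peel : ∀ (t : ℤ) (n : ℕ),
      (∏ k ∈ Finset.range (n+1), |Real.sin (2 ^ k * (t : ℝ) * Real.pi / m)|)
        = |Real.sin ((t:ℝ) * π / m)| *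
          ∏ k ∈ Finset.range n, |Real.sin (2 ^ k * ((2*t : ℤ) : ℝ) * Real.pi / m)| := by
    intro t n
    rw [Finset.prod_range_succ', mul_comm]
    congr 1
    · norm_num
    · apply Finset.prod_congr rfl
      intro k _
      have e : (2:ℝ) ^ (k+1) * (t:ℝ) = 2 ^ k * ((2*t : ℤ) : ℝ) := by push_cast; ring
      rw [e]
  intro n
  induction n using Nat.strong_induction_on with
  | _ n ih =>
    intro t hn
    obtain ⟨n', rfl⟩ : ∃ n', n = n' + 1 := ⟨n - 1, by omega⟩
    rcases Nat.lt_or_ge n' 1 with h0 | h1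
    · have : n' = 0 := by omega
      subst this
      simp only [Finset.prod_range_one, pow_zero, Nat.sub_self]
      norm_num [abs_sin_le_one]
    · rcases g7_lemL m hm h3 t with hL | hR
      · rw [peel t n']
        have hrec := ih n' (by omega) (2*t) h1
        have hPn : (0:ℝ) ≤ ∏ k ∈ Finset.range n',
            |Real.sin (2 ^ k * ((2*t : ℤ) : ℝ) * Real.pi / m)| :=
          Finset.prod_nonneg fun _ _ => abs_nonneg _
        calc |Real.sin ((t:ℝ) * π / m)| *
              ∏ k ∈ Finset.range n', |Real.sin (2 ^ k * ((2*t : ℤ) : ℝ) * Real.pi / m)|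
            ≤ b m * b m ^ (n' - 1) := mul_le_mul hL hrec hPn hb0
          _ = b m ^ (n' - 1 + 1) := (pow_succ' _ _).symm
          _ = b m ^ (n' + 1 - 1) := by congr 1; omega
      · have hR' : |Real.sin ((t:ℝ) * π / m)| * |Real.sin (((2*t : ℤ):ℝ) * π / m)| ≤ bsq m := by
          have e : ((2*t : ℤ):ℝ) * π / (m:ℝ) = (2*(t:ℝ)) * π / m := by push_cast; ring
          rw [e]; exact hR
        rcases Nat.lt_or_ge n' 2 with h2 | h2
        · have : n' = 1 := by omega
          subst this
          rw [peel t 1, Finset.prod_range_one]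
          have e0 : (2:ℝ) ^ (0:ℕ) * ((2*t : ℤ) : ℝ) * Real.pi / m = ((2*t : ℤ):ℝ) * π / m := by
            norm_num
          rw [e0]
          calc |Real.sin ((t:ℝ) * π / m)| * |Real.sin (((2*t : ℤ):ℝ) * π / m)|
              ≤ bsq m := hR'
            _ = b m ^ 2 := (g7_b_sq m hm).symm
            _ ≤ b m ^ 1 := pow_le_pow_of_le_one hb0 hb1 (by omega)
            _ = b m ^ (1 + 1 - 1) := by norm_num
        · obtain ⟨k, rfl⟩ : ∃ k, n' = k + 2 := ⟨n' - 2, by omega⟩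
          rw [peel t (k+2), peel (2*t) (k+1)]
          have hrec := ih (k+1) (by omega) (2*(2*t)) (by omega)
          have hPn : (0:ℝ) ≤ ∏ j ∈ Finset.range (k+1),
              |Real.sin (2 ^ j * ((2*(2*t) : ℤ) : ℝ) * Real.pi / m)| :=
            Finset.prod_nonneg fun _ _ => abs_nonneg _
          have hs0 : (0:ℝ) ≤ |Real.sin ((t:ℝ) * π / m)| := abs_nonneg _
          have hs1 : (0:ℝ) ≤ |Real.sin ((((2*t : ℤ)):ℝ) * π / m)| := abs_nonneg _
          have hbk : (0:ℝ) ≤ b m ^ (k + 1 - 1) := pow_nonneg hb0 _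
          calc |Real.sin ((t:ℝ) * π / m)| * (|Real.sin ((((2*t : ℤ)):ℝ) * π / m)| *
                ∏ j ∈ Finset.range (k+1), |Real.sin (2 ^ j * ((2*(2*t) : ℤ) : ℝ) * Real.pi / m)|)
              = (|Real.sin ((t:ℝ) * π / m)| * |Real.sin ((((2*t : ℤ)):ℝ) * π / m)|) *
                ∏ j ∈ Finset.range (k+1),
                  |Real.sin (2 ^ j * ((2*(2*t) : ℤ) : ℝ) * Real.pi / m)| := by ring
            _ ≤ bsq m * b m ^ (k + 1 - 1) :=
                mul_le_mul hR' hrec hPn (g7_bsq_nonneg m hm)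
            _ = b m ^ 2 * b m ^ k := by rw [← g7_b_sq m hm]; norm_num
            _ = b m ^ (k + 2) := by rw [← pow_add]; ring_nf
            _ = b m ^ (k + 2 + 1 - 1) := by congr 1
  
theorem stmt_7 (m : ℕ) (hm : 5 ≤ m) (hgcd : Nat.gcd m 3 = 1) (t : ℤ) (h : ℕ) (hh : 1 ≤ h) :
    (∏ k ∈ Finset.range h, |Real.sin (2 ^ k * (t : ℝ) * Real.pi / m)|) ≤ b m ^ (h - 1) := by
  have h3 : m % 3 = 1 ∨ m % 3 = 2 := by
    have hlt : m % 3 < 3 := Nat.mod_lt _ (by norm_num)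
    rcases Nat.lt_or_ge (m % 3) 1 with h0 | _
    · exfalso
      have hdvd : (3:ℕ) ∣ m := Nat.dvd_of_mod_eq_zero (by omega)
      have := Nat.dvd_gcd hdvd (dvd_refl 3)
      rw [hgcd] at this
      exact absurd (Nat.le_of_dvd one_pos this) (by norm_num)
    · omega
  exact g7_main m hm h3 h t hh
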